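/- Let G be a graph, S a stable set of G, and suppose some vertex j ∉ S has exactly one neighbor i in S. Let k = |S|, u = χ^S/k, ũ = χ^{(S\{i})∪{j}}/k, and z = t u + (1−t) ũ for t ∈ (0,1). Then f_G(z) = 1/k = f_G(u), i.e., the whole segment between u and ũ has constant objective value. -/

import Mathlib

open Matrix Finset
open scoped Classical

def IsStable {n : ℕ} (G : SimpleGraph (Fin n)) (S : Finset (Fin n)) : Prop :=
  ∀ i ∈ S, ∀ j ∈ S, ¬ G.Adj i j

noncomputable def alpha {n : ℕ} (G : SimpleGraph (Fin n)) : ℕ :=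
  sSup {k | ∃ S : Finset (Fin n), IsStable G S ∧ S.card = k}

noncomputable def indic {n : ℕ} (S : Finset (Fin n)) : Fin n → ℝ :=
  fun i => if i ∈ S then 1 else 0

noncomputable def qform {n : ℕ} (M : Matrix (Fin n) (Fin n) ℝ) (x : Fin n → ℝ) : ℝ :=
  x ⬝ᵥ M.mulVec x

noncomputable def fG {n : ℕ} (G : SimpleGraph (Fin n)) (x : Fin n → ℝ) : ℝ :=
  qform (1 + G.adjMatrix ℝ) x

noncomputable def globMin {n : ℕ} (f : (Fin n → ℝ) → ℝ) : Set (Fin n → ℝ) :=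
  {x | x ∈ stdSimplex ℝ (Fin n) ∧ ∀ y ∈ stdSimplex ℝ (Fin n), f x ≤ f y}

lemma qform_split {n : ℕ} (G : SimpleGraph (Fin n)) (x : Fin n → ℝ) :
    fG G x = (∑ p, x p ^ 2) + ∑ p, ∑ q, (if G.Adj p q then x p * x q else 0) := by
  unfold fG qform
  simp only [dotProduct, mulVec, Matrix.add_apply, Matrix.one_apply,
    SimpleGraph.adjMatrix_apply, add_mul, mul_add, Finset.sum_add_distrib]
  congr 1
  · refine Finset.sum_congr rfl fun p _ => ?_
    simp [mul_ite, ite_mul, Finset.sum_ite_eq, pow_two]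
  · refine Finset.sum_congr rfl fun p _ => ?_
    rw [Finset.mul_sum]
    refine Finset.sum_congr rfl fun q _ => ?_
    by_cases h : G.Adj p q <;> simp [h]

lemma fG_stable {n : ℕ} (G : SimpleGraph (Fin n)) (S : Finset (Fin n))
    (hS : IsStable G S) (c : ℝ) :
    fG G (c • indic S) = c ^ 2 * S.card := by
  rw [qform_split]
  have h1 : ∀ p : Fin n, (c • indic S) p ^ 2 = if p ∈ S then c ^ 2 else 0 := by
    intro p; by_cases h : p ∈ S <;> simp [indic, h]
  have h2 : ∀ p q : Fin n,
      (if G.Adj p q then (c • indic S) p * (c • indic S) q else 0) = 0 := by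
    intro p q
    by_cases hpq : G.Adj p q
    · by_cases hp : p ∈ S
      · by_cases hq : q ∈ S
        · exact absurd hpq (hS p hp q hq)
        · simp [indic, hpq, hq]
      · simp [indic, hpq, hp]
    · simp [hpq]
  simp only [Finset.sum_congr rfl (fun p _ => h1 p)]
  rw [Finset.sum_congr rfl (fun p _ => Finset.sum_congr rfl (fun q _ => h2 p q))]
  simp [Finset.sum_ite_mem, mul_comm]

theorem stmt_16 (n : ℕ) (G : SimpleGraph (Fin n)) (S : Finset (Fin n))
    (hS : IsStable G S) (i j : Fin n) (hj : j ∉ S)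
    (hfilter : S.filter (fun s => G.Adj s j) = {i}) :
    fG G ((S.card : ℝ)⁻¹ • indic S) = 1 / (S.card : ℝ) ∧
      ∀ t ∈ Set.Ioo (0:ℝ) 1,
        fG G (t • ((S.card : ℝ)⁻¹ • indic S) +
          (1 - t) • ((S.card : ℝ)⁻¹ • indic (insert j (S.erase i)))) = 1 / (S.card : ℝ) := by
  have hi : i ∈ S ∧ G.Adj i j := by
    have : i ∈ S.filter (fun s => G.Adj s j) := by rw [hfilter]; exact Finset.mem_singleton_self i
    exact Finset.mem_filter.mp this
  obtain ⟨hiS, hadj⟩ := hi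
  have hji : j ≠ i := fun h => hj (h ▸ hiS)
  have honly : ∀ s ∈ S, G.Adj s j → s = i := by
    intro s hs hsj
    have : s ∈ S.filter (fun s => G.Adj s j) := Finset.mem_filter.mpr ⟨hs, hsj⟩
    rwa [hfilter, Finset.mem_singleton] at this
  have hk1 : 1 ≤ S.card := Finset.card_pos.mpr ⟨i, hiS⟩
  have hk0 : (S.card : ℝ) ≠ 0 := by positivity
  constructor
  · rw [fG_stable G S hS]
    field_simp
  · intro t ht
    obtain ⟨ht0, ht1⟩ := ht
    set k : ℝ := (S.card : ℝ) with hkdef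
    set w : Fin n → ℝ := fun p => if p = i then t else if p = j then 1 - t else indic S p with hw
    have hz : (t • ((S.card : ℝ)⁻¹ • indic S) +
        (1 - t) • ((S.card : ℝ)⁻¹ • indic (insert j (S.erase i)))) = fun p => k⁻¹ * w p := by
      funext p
      simp only [Pi.add_apply, Pi.smul_apply, smul_eq_mul, hw]
      by_cases hpi : p = i
      · subst hpi
        simp [indic, hiS, hji.symm, Finset.mem_insert, Finset.mem_erase]
        ring
      · by_cases hpj : p = j
        · subst hpj
          simp [indic, hj, hji, hpi]
          ring
        · by_cases hpS : p ∈ S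
          · simp [indic, hpS, hpi, hpj, Finset.mem_insert, Finset.mem_erase]
            ring
          · simp [indic, hpS, hpi, hpj, Finset.mem_insert, Finset.mem_erase]
    rw [hz, qform_split]
    have hwi : w i = t := by simp [hw]
    have hwj : w j = 1 - t := by simp [hw, hji, hji.symm]
    have hsupp : ∀ p, w p ≠ 0 → p = j ∨ p ∈ S := by
      intro p hp
      by_cases hpi : p = i
      · exact Or.inr (hpi ▸ hiS)
      · by_cases hpj : p = j
        · exact Or.inl hpj
        · right
          simp only [hw, hpi, hpj, if_false, indic] at hp
          by_contra hpS
          simp [hpS] at hp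
    have key : ∀ p q, G.Adj p q → ¬(p = i ∧ q = j) → ¬(p = j ∧ q = i) → w p * w q = 0 := by
      intro p q hpq h1 h2
      by_contra hne
      have hp := left_ne_zero_of_mul hne
      have hq := right_ne_zero_of_mul hne
      rcases hsupp p hp with hpj | hpS <;> rcases hsupp q hq with hqj | hqS
      · exact G.irrefl (hpj ▸ hqj ▸ hpq)
      · exact h2 ⟨hpj, honly q hqS (G.adj_symm (hpj ▸ hpq))⟩
      · exact h1 ⟨honly p hpS (hqj ▸ hpq), hqj⟩
      · exact hS p hpS q hqS hpq
    set c : ℝ := k⁻¹ * t * (k⁻¹ * (1 - t)) with hc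
    have hcross : ∀ p q : Fin n,
        (if G.Adj p q then (k⁻¹ * w p) * (k⁻¹ * w q) else 0) =
        (if p = i then (if q = j then c else 0) else 0) +
        (if p = j then (if q = i then c else 0) else 0) := by
      intro p q
      by_cases h1 : p = i ∧ q = j
      · obtain ⟨hp, hq⟩ := h1
        have hadj' : G.Adj p q := by rw [hp, hq]; exact hadj
        have hpj : ¬ p = j := by rw [hp]; exact Ne.symm hji
        have hwp : w p = t := by rw [hp, hwi]
        have hwq : w q = 1 - t := by rw [hq, hwj]
        rw [if_pos hadj', if_pos hp, if_pos hq, if_neg hpj, hwp, hwq, hc]; ring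
      · by_cases h2 : p = j ∧ q = i
        · obtain ⟨hp, hq⟩ := h2
          have hadj' : G.Adj p q := by rw [hp, hq]; exact G.adj_symm hadj
          have hpi : ¬ p = i := by rw [hp]; exact hji
          have hwp : w p = 1 - t := by rw [hp, hwj]
          have hwq : w q = t := by rw [hq, hwi]
          rw [if_pos hadj', if_neg hpi, if_pos hp, if_pos hq, hwp, hwq, hc]; ring
        · by_cases hpq : G.Adj p q
          · have h0 := key p q hpq h1 h2
            have hL : k⁻¹ * w p * (k⁻¹ * w q) = 0 := by
              rcases mul_eq_zero.mp h0 with h | h <;> rw [h] <;> ring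
            rw [if_pos hpq, hL]
            by_cases hpi : p = i
            · have hqj : ¬ q = j := fun h => h1 ⟨hpi, h⟩
              have hpj : ¬ p = j := by rw [hpi]; exact Ne.symm hji
              rw [if_pos hpi, if_neg hqj, if_neg hpj]; ring
            · rw [if_neg hpi]
              by_cases hpj : p = j
              · have hqi : ¬ q = i := fun h => h2 ⟨hpj, h⟩
                rw [if_pos hpj, if_neg hqi]; ring
              · rw [if_neg hpj]; ring
          · rw [if_neg hpq]
            by_cases hpi : p = i
            · have hqj : ¬ q = j := fun h => hpq (by rw [hpi, h]; exact hadj)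
              have hpj : ¬ p = j := by rw [hpi]; exact Ne.symm hji
              rw [if_pos hpi, if_neg hqj, if_neg hpj]; ring
            · rw [if_neg hpi]
              by_cases hpj : p = j
              · have hqi : ¬ q = i := fun h => hpq (by rw [hpj, h]; exact G.adj_symm hadj)
                rw [if_pos hpj, if_neg hqi]; ring
              · rw [if_neg hpj]; ring
    have hsq : ∀ p : Fin n, (k⁻¹ * w p) ^ 2 =
        k⁻¹ ^ 2 * ((if p = i then t ^ 2 else 0) + (if p = j then (1 - t) ^ 2 else 0)
          + (if p ∈ S.erase i then 1 else 0)) := by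
      intro p
      by_cases hpi : p = i
      · have hpe : p ∉ S.erase i := by rw [hpi]; exact Finset.notMem_erase i S
        have hpj : ¬ p = j := by rw [hpi]; exact Ne.symm hji
        have hwp : w p = t := by rw [hpi, hwi]
        rw [hwp, if_pos hpi, if_neg hpj, if_neg hpe]; ring
      · by_cases hpj : p = j
        · have hpe : p ∉ S.erase i := by
            rw [hpj]; exact fun h => hj (Finset.mem_of_mem_erase h)
          have hwp : w p = 1 - t := by rw [hpj, hwj]
          rw [hwp, if_neg hpi, if_pos hpj, if_neg hpe]; ring
        · have hwp : w p = indic S p := by simp only [hw]; rw [if_neg hpi, if_neg hpj]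
          by_cases hpS : p ∈ S
          · have hpe : p ∈ S.erase i := Finset.mem_erase.mpr ⟨hpi, hpS⟩
            rw [hwp, if_neg hpi, if_neg hpj, if_pos hpe]
            simp only [indic, if_pos hpS]; ring
          · have hpe : p ∉ S.erase i := fun h => hpS (Finset.mem_of_mem_erase h)
            rw [hwp, if_neg hpi, if_neg hpj, if_neg hpe]
            simp only [indic, if_neg hpS]; ring
    rw [Finset.sum_congr rfl (fun p _ => hsq p),
        Finset.sum_congr rfl (fun p _ => Finset.sum_congr rfl (fun q _ => hcross p q))]
    have hcard : ((S.erase i).card : ℝ) = k - 1 := by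
      rw [Finset.card_erase_of_mem hiS, Nat.cast_sub hk1, Nat.cast_one]
    have e1 : ∑ p, k⁻¹ ^ 2 * ((if p = i then t ^ 2 else 0) + (if p = j then (1 - t) ^ 2 else 0)
          + (if p ∈ S.erase i then 1 else 0)) = k⁻¹ ^ 2 * (t ^ 2 + (1 - t) ^ 2 + (k - 1)) := by
      rw [← Finset.mul_sum]
      congr 1
      rw [Finset.sum_add_distrib, Finset.sum_add_distrib]
      congr 1
      · congr 1
        · simp
        · simp
      · rw [← hcard, Finset.sum_ite_mem, Finset.univ_inter, Finset.sum_const,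
          nsmul_eq_mul, mul_one]
    have hsum1 : ∀ (x : Fin n) (v : ℝ), (∑ q : Fin n, if q = x then v else 0) = v := by
      intro x v
      rw [Finset.sum_ite_eq']
      simp
    have f1 : ∀ p, (∑ q : Fin n, if p = i then (if q = j then c else 0) else 0) =
        if p = i then c else 0 := by
      intro p
      by_cases hp : p = i
      · simp only [if_pos hp]; exact hsum1 j c
      · simp only [if_neg hp, Finset.sum_const_zero]
    have f2 : ∀ p, (∑ q : Fin n, if p = j then (if q = i then c else 0) else 0) =
        if p = j then c else 0 := by
      intro p
      by_cases hp : p = j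
      · simp only [if_pos hp]; exact hsum1 i c
      · simp only [if_neg hp, Finset.sum_const_zero]
    have e2 : ∑ p : Fin n, ∑ q : Fin n,
        ((if p = i then (if q = j then c else 0) else 0) +
         (if p = j then (if q = i then c else 0) else 0)) = c + c := by
      rw [Finset.sum_congr rfl (fun p _ => by rw [Finset.sum_add_distrib, f1 p, f2 p]),
        Finset.sum_add_distrib, hsum1 i c, hsum1 j c]
    rw [e1, e2, hc, one_div]
    have final : k⁻¹ ^ 2 * (t ^ 2 + (1 - t) ^ 2 + (k - 1)) +
        (k⁻¹ * t * (k⁻¹ * (1 - t)) + k⁻¹ * t * (k⁻¹ * (1 - t))) = k⁻¹ * (k⁻¹ * k) := by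
      ring
    rw [final, inv_mul_cancel₀ hk0, mul_one]
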